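/- arXiv:1702.02681 — 8 statements merged into one kernel-verified Lean document; each statement's English description precedes it below -/
import Mathlib

section
/- Let [2] denote the linear order with three elements 0 < 1 < 2, regarded as a category. The inclusion of the full subcategory on the non-consecutive subset {0, 2} into [2] (the functor induced by the monotone map sending 0 ↦ 0 and 1 ↦ 2), regarded as a morphism in Cat, is NOT exponentiable: the base-change functor Over.pullback along it does not admit a right adjoint. -/
/-!
Let `[2]` denote the linear order with three elements `0 < 1 < 2` (the category `Fin 3`).
The inclusion of the full subcategory on the non-consecutive subset `{0, 2}` into `[2]`, i.e. the
functor `Fin 2 ⥤ Fin 3` induced by the monotone map sending `0 ↦ 0` and `1 ↦ 2`, regarded as a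
morphism in `Cat`, is NOT exponentiable: the base-change functor `Over.pullback` along it does
not admit a right adjoint.
-/

open CategoryTheory

/-- The monotone map `Fin 2 → Fin 3` sending `0 ↦ 0` and `1 ↦ 2`. -/
def endpointsMonotone : Monotone (fun k : Fin 2 => (⟨2 * k.1, by omega⟩ : Fin 3)) := by
  intro a b hab
  simp only [Fin.mk_le_mk]
  omega

/-- The inclusion functor `{0 < 2} ↪ [2]`, i.e. `Fin 2 ⥤ Fin 3`, `0 ↦ 0`, `1 ↦ 2`. -/
def endpointsInclusion : Fin 2 ⥤ Fin 3 :=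
  endpointsMonotone.functor

namespace EndpointsAux

open CategoryTheory.Limits

instance homSubsingleton {α : Type*} [Preorder α] (a b : α) : Subsingleton (a ⟶ b) :=
  ⟨by rintro ⟨⟨_⟩⟩ ⟨⟨_⟩⟩; rfl⟩

instance sumHomSubsingleton : ∀ x y : Fin 2 ⊕ Fin 2, Subsingleton (x ⟶ y)
  | .inl a, .inl b => ⟨fun ⟨f⟩ ⟨g⟩ => congrArg ULift.up (Subsingleton.elim f g)⟩
  | .inl _, .inr _ => ⟨fun f _ => nomatch f⟩
  | .inr _, .inl _ => ⟨fun f _ => nomatch f⟩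
  | .inr a, .inr b => ⟨fun ⟨f⟩ ⟨g⟩ => congrArg ULift.up (Subsingleton.elim f g)⟩

/-- The gluing map `[1] ⊔ [1] → [2]`. -/
def glueFun : (Fin 2 ⊕ Fin 2) → Fin 3
  | .inl j => ⟨j.1, by omega⟩
  | .inr j => ⟨j.1 + 1, by omega⟩

/-- The gluing functor `[1] ⊔ [1] ⥤ [2]`. -/
def glue : (Fin 2 ⊕ Fin 2) ⥤ Fin 3 where
  obj := glueFun
  map {X Y} f :=
    match X, Y, f with
    | .inl _, .inl _, f => homOfLE (Fin.mk_le_mk.mpr (leOfHom f.down))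
    | .inr _, .inr _, f => homOfLE (Fin.mk_le_mk.mpr (Nat.succ_le_succ (leOfHom f.down)))
    | .inl _, .inr _, f => nomatch f
    | .inr _, .inl _, f => nomatch f
  map_id _ := Subsingleton.elim _ _
  map_comp _ _ := Subsingleton.elim _ _

abbrev pfun (k : Fin 2) : Fin 3 := ⟨2 * k.1, by omega⟩

def Qprop (z : (Fin 2 ⊕ Fin 2) × Fin 2) : Prop := glueFun z.1 = pfun z.2

abbrev Q := ObjectProperty.FullSubcategory (C := (Fin 2 ⊕ Fin 2) × Fin 2) Qprop

instance QHomSubsingleton (z w : Q) : Subsingleton (z ⟶ w) :=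
  ⟨fun f g => InducedCategory.hom_ext (Prod.ext (Subsingleton.elim _ _) (Subsingleton.elim _ _))⟩

def qfst : Q ⥤ (Fin 2 ⊕ Fin 2) := ObjectProperty.ι _ ⋙ CategoryTheory.Prod.fst _ _
def qsnd : Q ⥤ Fin 2 := ObjectProperty.ι _ ⋙ CategoryTheory.Prod.snd _ _

def glueCat : Cat.of (Fin 2 ⊕ Fin 2) ⟶ Cat.of (Fin 3) := glue.toCatHom
def pCat : Cat.of (Fin 2) ⟶ Cat.of (Fin 3) := endpointsInclusion.toCatHom
def qfstCat : Cat.of Q ⟶ Cat.of (Fin 2 ⊕ Fin 2) := qfst.toCatHom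
def qsndCat : Cat.of Q ⟶ Cat.of (Fin 2) := qsnd.toCatHom

lemma square : qfstCat ≫ glueCat = qsndCat ≫ pCat :=
  Cat.Hom.ext <| CategoryTheory.Functor.ext (fun (z : EndpointsAux.Q) => z.property) (fun _ _ _ => @Subsingleton.elim _ (homSubsingleton (α := Fin 3) _ _) _ _)

lemma Qext {z w : Q} (h : z.obj = w.obj) : z = w := by
  cases z; cases w; cases h; rfl

/-- The lift functor for the pullback universal property. -/
def liftF {T : Type*} [Category T] (A : T ⥤ (Fin 2 ⊕ Fin 2)) (B : T ⥤ Fin 2)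
    (h : ∀ t, glueFun (A.obj t) = pfun (B.obj t)) : T ⥤ Q where
  obj t := ⟨(A.obj t, B.obj t), h t⟩
  map f := ⟨(A.map f, B.map f)⟩
  map_id _ := Subsingleton.elim _ _
  map_comp _ _ := Subsingleton.elim _ _

def bigSquare : IsPullback qfstCat qsndCat glueCat pCat := by
  apply IsPullback.of_isLimit' ⟨square⟩
  apply PullbackCone.IsLimit.mk
  case lift =>
    intro s
    exact (liftF s.fst.toFunctor s.snd.toFunctor (fun t => Functor.congr_obj (congrArg Cat.Hom.toFunctor s.condition) t)).toCatHom
  case fac_left =>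
    intro s
    exact Cat.Hom.ext <| CategoryTheory.Functor.ext (fun t => rfl) (fun X Y f => @Subsingleton.elim _ (sumHomSubsingleton _ _) _ _)
  case fac_right =>
    intro s
    exact Cat.Hom.ext <| CategoryTheory.Functor.ext (fun t => rfl) (fun X Y f => @Subsingleton.elim _ (homSubsingleton (α := Fin 2) _ _) _ _)
  case uniq =>
    intro s m h1 h2
    apply Cat.Hom.ext
    apply CategoryTheory.Functor.ext
    case h_obj =>
      intro t
      apply Qext
      exact Prod.ext (Functor.congr_obj (congrArg Cat.Hom.toFunctor h1) t) (Functor.congr_obj (congrArg Cat.Hom.toFunctor h2) t)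
    case h_map =>
      intro X Y f
      exact @Subsingleton.elim _ (QHomSubsingleton _ _) _ _

lemma glue_cancel {Z : Type*} [Category Z] (G H : Fin 3 ⥤ Z)
    (h : glue ⋙ G = glue ⋙ H) : G = H := by
  have hobj : ∀ a : Fin 3, G.obj a = H.obj a := by
    intro a
    match a with
    | ⟨0, _⟩ => exact Functor.congr_obj h (Sum.inl 0)
    | ⟨1, _⟩ => exact Functor.congr_obj h (Sum.inl 1)
    | ⟨2, _⟩ => exact Functor.congr_obj h (Sum.inr 1)
  have hmap : ∀ (x y : Fin 2 ⊕ Fin 2) (g : x ⟶ y),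
      G.map (glue.map g) =
        eqToHom (hobj _) ≫ H.map (glue.map g) ≫ eqToHom (hobj _).symm := by
    intro x y g
    exact Functor.congr_hom h g
  have k01 := hmap (Sum.inl 0) (Sum.inl 1)
    (ULift.up (show (0 : Fin 2) ⟶ 1 from homOfLE (by decide)))
  have k12 := hmap (Sum.inr 0) (Sum.inr 1)
    (ULift.up (show (0 : Fin 2) ⟶ 1 from homOfLE (by decide)))
  refine CategoryTheory.Functor.ext hobj ?_
  intro a b f
  match a, b with
  | ⟨0, _⟩, ⟨0, _⟩ => rw [Subsingleton.elim f (𝟙 _)]; simp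
  | ⟨1, _⟩, ⟨1, _⟩ => rw [Subsingleton.elim f (𝟙 _)]; simp
  | ⟨2, _⟩, ⟨2, _⟩ => rw [Subsingleton.elim f (𝟙 _)]; simp
  | ⟨1, _⟩, ⟨0, _⟩ => exact absurd (Fin.mk_le_mk.mp (leOfHom f)) (by omega)
  | ⟨2, _⟩, ⟨0, _⟩ => exact absurd (Fin.mk_le_mk.mp (leOfHom f)) (by omega)
  | ⟨2, _⟩, ⟨1, _⟩ => exact absurd (Fin.mk_le_mk.mp (leOfHom f)) (by omega)
  | ⟨0, _⟩, ⟨1, _⟩ =>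
    rw [Subsingleton.elim f
      (glue.map (show (Sum.inl 0 : Fin 2 ⊕ Fin 2) ⟶ Sum.inl 1 from
        ULift.up (show (0 : Fin 2) ⟶ 1 from homOfLE (by decide))))]
    exact k01
  | ⟨1, _⟩, ⟨2, _⟩ =>
    rw [Subsingleton.elim f
      (glue.map (show (Sum.inr 0 : Fin 2 ⊕ Fin 2) ⟶ Sum.inr 1 from
        ULift.up (show (0 : Fin 2) ⟶ 1 from homOfLE (by decide))))]
    exact k12
  | ⟨0, _⟩, ⟨2, _⟩ =>
    rw [Subsingleton.elim f
      ((glue.map (show (Sum.inl 0 : Fin 2 ⊕ Fin 2) ⟶ Sum.inl 1 from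
          ULift.up (show (0 : Fin 2) ⟶ 1 from homOfLE (by decide)))) ≫
       (glue.map (show (Sum.inr 0 : Fin 2 ⊕ Fin 2) ⟶ Sum.inr 1 from
          ULift.up (show (0 : Fin 2) ⟶ 1 from homOfLE (by decide)))))]
    have key : ∀ {x y z : Fin 3} (p : x ⟶ y) (q : y ⟶ z),
        G.map p = eqToHom (hobj x) ≫ H.map p ≫ eqToHom (hobj y).symm →
        G.map q = eqToHom (hobj y) ≫ H.map q ≫ eqToHom (hobj z).symm →
        G.map (p ≫ q) = eqToHom (hobj x) ≫ H.map (p ≫ q) ≫ eqToHom (hobj z).symm := by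
      intro x y z p q hp hq; rw [G.map_comp, H.map_comp, hp, hq]; simp
    exact key _ _ k01 k12

lemma epi_glue : Epi glueCat := by
  constructor
  intro Z G H h
  exact Cat.Hom.ext (glue_cancel G.toFunctor H.toFunctor (congrArg Cat.Hom.toFunctor h))

lemma Q_hom_eq {z w : Q} (f : z ⟶ w) : z = w := by
  obtain ⟨⟨x, k⟩, hz⟩ := z
  obtain ⟨⟨y, l⟩, hw⟩ := w
  apply Qext
  obtain ⟨⟨f1, f2⟩⟩ := f
  have h2 : k ≤ l := leOfHom f2
  rcases x with a | a <;> rcases y with b | b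
  · have ha : a.1 = 2 * k.1 := congrArg Fin.val hz
    have hb : b.1 = 2 * l.1 := congrArg Fin.val hw
    have h1 : a ≤ b := leOfHom f1.down
    have hk := k.2; have hl := l.2; have haa := a.2; have hbb := b.2
    refine Prod.ext ?_ ?_
    · exact congrArg Sum.inl (Fin.ext (by omega))
    · show k = l; exact Fin.ext (by omega)
  · exact f1.elim
  · exact f1.elim
  · have ha : a.1 + 1 = 2 * k.1 := congrArg Fin.val hz
    have hb : b.1 + 1 = 2 * l.1 := congrArg Fin.val hw
    have h1 : a ≤ b := leOfHom f1.down
    have hk := k.2; have hl := l.2; have haa := a.2; have hbb := b.2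
    refine Prod.ext ?_ ?_
    · exact congrArg Sum.inr (Fin.ext (by omega))
    · show k = l; exact Fin.ext (by omega)

open Limits in
def Gpair : Fin 2 ⥤ WalkingParallelPair := ComposableArrows.mk₁ WalkingParallelPairHom.left

open Limits in
def Hpair : Fin 2 ⥤ WalkingParallelPair := ComposableArrows.mk₁ WalkingParallelPairHom.right

lemma Gpair_ne : Gpair ≠ Hpair := by
  intro h
  have := Functor.congr_hom h
    (homOfLE (show (⟨0, by omega⟩ : Fin 2) ≤ ⟨1, by omega⟩ by simp))
  simp [Gpair, Hpair] at this
  cases this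

lemma not_epi_qsnd : ¬ Epi qsndCat := by
  intro h
  have heq : qsndCat ≫ (show Cat.of (Fin 2) ⟶ Cat.of WalkingParallelPair from Gpair.toCatHom)
           = qsndCat ≫ (show Cat.of (Fin 2) ⟶ Cat.of WalkingParallelPair from Hpair.toCatHom) := by
    apply Cat.Hom.ext
    apply CategoryTheory.Functor.ext
    case h_obj => intro z; rfl
    case h_map =>
      intro z w f
      obtain rfl := Q_hom_eq f
      rw [@Subsingleton.elim _ (QHomSubsingleton z z) f (𝟙 z)]
      have key : ∀ {C D : Type} [Category C] [Category D] (F F' : C ⥤ D) (x : C)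
          (e : F.obj x = F'.obj x), F.map (𝟙 x) = eqToHom e ≫ F'.map (𝟙 x) ≫ eqToHom e.symm := by
        intros; simp
      exact key (qsndCat ≫ Gpair.toCatHom).toFunctor (qsndCat ≫ Hpair.toCatHom).toFunctor z _
  exact Gpair_ne (congrArg Cat.Hom.toFunctor (h.left_cancellation _ _ heq))

end EndpointsAux

open EndpointsAux CategoryTheory.Limits

theorem endpointsInclusion_not_exponentiable :
    ¬ (Over.pullback
        (show Cat.of (Fin 2) ⟶ Cat.of (Fin 3) from endpointsInclusion.toCatHom)).IsLeftAdjoint := by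
  intro hLA
  obtain ⟨R, ⟨adj⟩⟩ := hLA.exists_rightAdjoint
  haveI : PreservesColimitsOfSize.{0,0} (Over.pullback pCat) :=
    adj.leftAdjoint_preservesColimits
  let u : Over.mk glueCat ⟶ Over.mk (𝟙 (Cat.of (Fin 3))) := Over.homMk glueCat (by simp)
  haveI hu : Epi u := by
    apply (Over.forget (Cat.of (Fin 3))).epi_of_epi_map
    have : (Over.forget (Cat.of (Fin 3))).map u = glueCat := rfl
    rw [this]; exact epi_glue
  haveI : Epi ((Over.pullback pCat).map u) := (Over.pullback pCat).map_epi u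
  haveI : PreservesColimitsOfSize.{0,0} (Over.forget (Cat.of (Fin 2))) :=
    (Over.forgetAdjStar (Cat.of (Fin 2))).leftAdjoint_preservesColimits
  haveI hq : Epi (((Over.pullback pCat).map u).left) :=
    (Over.forget (Cat.of (Fin 2))).map_epi ((Over.pullback pCat).map u)
  have hw := Over.w ((Over.pullback pCat).map u)
  simp only [Over.pullback_obj_hom, Over.mk_hom] at hw
  haveI : IsIso (pullback.snd (𝟙 (Cat.of (Fin 3))) pCat) := inferInstance
  have h1 : Epi (pullback.snd glueCat pCat) := by
    rw [← hw]; exact epi_comp _ _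
  have h2 : Epi qsndCat := by
    rw [← bigSquare.isoPullback_hom_snd]
    exact epi_comp _ _
  exact not_epi_qsnd h2
end

section
/- Let I denote the linear order with two elements 0 < 1, regarded as a category, and let p : E ⥤ I be a functor. Then p is a fibered category (Grothendieck fibration) if and only if the inclusion functor of the fiber of p over 0 into E admits a right adjoint (i.e., the fiber inclusion Fiber p 0 ⥤ E is a left adjoint). -/
/-!
Let `I` denote the linear order with two elements `0 < 1` (the category `Fin 2`), and let
`p : E ⥤ I` be a functor.  Then `p` is a fibered category (Grothendieck fibration) if and only
if the inclusion functor of the fiber of `p` over `0` into `E` admits a right adjoint (i.e. the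
fiber inclusion `Fiber p 0 ⥤ E` is a left adjoint).
-/

universe v u

open CategoryTheory CategoryTheory.Functor CategoryTheory.Limits

/-- Over a thin base, any morphism with the right endpoints is a hom-lift. -/
lemma isHomLift_of_thin {E : Type u} [Category.{v} E] (p : E ⥤ Fin 2) {R S : Fin 2}
    (f : R ⟶ S) {a b : E} (φ : a ⟶ b) (ha : p.obj a = R) (hb : p.obj b = S) :
    p.IsHomLift f φ := by
  subst ha hb
  have : f = p.map φ := Subsingleton.elim f (p.map φ)
  rw [this]
  infer_instance

theorem isFibered_iff_fiberInclusion_isLeftAdjoint {E : Type u} [Category.{v} E]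
    (p : E ⥤ Fin 2) :
    p.IsFibered ↔ (Fiber.fiberInclusion : Fiber p 0 ⥤ E).IsLeftAdjoint := by
  have f01 : (0 : Fin 2) ⟶ 1 := homOfLE (by decide)
  constructor
  · intro hp
    -- build a terminal object in each costructured arrow category
    have : ∀ e : E, HasTerminal (CostructuredArrow (Fiber.fiberInclusion : Fiber p 0 ⥤ E) e) := by
      intro e
      rcases (by omega : p.obj e = 0 ∨ p.obj e = 1) with h | h
      · -- `e` lies in the fiber over `0`; the identity is terminal
        refine IsTerminal.hasTerminal (X := CostructuredArrow.mk
          (Y := Fiber.mk h) (𝟙 e)) (IsTerminal.ofUniqueHom (fun Y => ?_) (fun Y m => ?_))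
        · exact CostructuredArrow.homMk
            ⟨Y.hom, isHomLift_of_thin p (𝟙 (0 : Fin 2)) Y.hom Y.left.2 h⟩
            (Category.comp_id _)
        · apply CostructuredArrow.hom_ext
          apply Fiber.hom_ext
          have := CostructuredArrow.w m
          exact (Category.comp_id _).symm.trans this
      · -- `e` lies over `1`: take a cartesian lift of `0 ⟶ 1`
        obtain ⟨b, φ, hφ⟩ := IsPreFibered.exists_isCartesian p h f01
        have hb : p.obj b = 0 := IsHomLift.domain_eq p f01 φ
        have hsc : p.IsStronglyCartesian f01 φ := inferInstance
        refine IsTerminal.hasTerminal (X := CostructuredArrow.mk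
          (Y := Fiber.mk hb) φ) (IsTerminal.ofUniqueHom (fun Y => ?_) (fun Y m => ?_))
        · have : p.IsHomLift ((𝟙 (0 : Fin 2)) ≫ f01) Y.hom :=
            isHomLift_of_thin p _ Y.hom Y.left.2 h
          exact CostructuredArrow.homMk
            ⟨@IsStronglyCartesian.map _ _ _ _ p _ _ _ _ f01 φ _ _ _ _ ((𝟙 (0 : Fin 2)) ≫ f01) rfl Y.hom this,
              IsStronglyCartesian.map_isHomLift p f01 φ rfl Y.hom⟩
            (IsStronglyCartesian.fac p f01 φ rfl Y.hom)
        · have : p.IsHomLift ((𝟙 (0 : Fin 2)) ≫ f01) Y.hom :=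
            isHomLift_of_thin p _ Y.hom Y.left.2 h
          apply CostructuredArrow.hom_ext
          apply Fiber.hom_ext
          refine @IsStronglyCartesian.map_uniq _ _ _ _ p _ _ _ _ f01 φ _ _ _ (𝟙 (0 : Fin 2)) ((𝟙 (0 : Fin 2)) ≫ f01) rfl Y.hom this _ m.left.2 ?_
          exact CostructuredArrow.w m
    exact isLeftAdjoint_of_costructuredArrowTerminals _
  · intro h
    obtain ⟨R, ⟨adj⟩⟩ := h.exists_rightAdjoint
    apply IsFibered.of_exists_isStronglyCartesian
    intro a S f
    by_cases hS : S = p.obj a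
    · subst hS
      have : f = 𝟙 (p.obj a) := Subsingleton.elim _ _
      subst this
      exact ⟨a, 𝟙 a, inferInstance⟩
    · -- then `S = 0` and `p.obj a = 1`
      have hle := leOfHom f
      have hS0 : S = 0 := by omega
      have ha1 : p.obj a = 1 := by omega
      subst hS0
      refine ⟨Fiber.fiberInclusion.obj (R.obj a), adj.counit.app a, ?_⟩
      have hl : p.IsHomLift f (adj.counit.app a) :=
        isHomLift_of_thin p f _ (R.obj a).2 rfl
      constructor
      intro c g φ' hφ'
      have hc0 : p.obj c = 0 := by
        have := leOfHom g
        omega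
      -- the fiber morphism given by the adjunction
      let u : Fiber.mk hc0 ⟶ R.obj a := adj.homEquiv (Fiber.mk hc0) a φ'
      have hfac : Fiber.fiberInclusion.map u ≫ adj.counit.app a = φ' := by
        have h1 := (adj.homEquiv (Fiber.mk hc0) a).symm_apply_apply φ'
        rwa [Adjunction.homEquiv_counit] at h1
      refine ⟨Fiber.fiberInclusion.map u, ⟨?_, hfac⟩, ?_⟩
      · exact isHomLift_of_thin p g _ rfl (R.obj a).2
      · rintro χ ⟨hχl, hχ⟩
        -- `χ` is a morphism between fiber objects, hence comes from the fiber
        have hχ0 : p.IsHomLift (𝟙 (0 : Fin 2)) χ := isHomLift_of_thin p _ χ hc0 (R.obj a).2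
        let χ' : Fiber.mk hc0 ⟶ R.obj a := ⟨χ, hχ0⟩
        have h1 : (adj.homEquiv (Fiber.mk hc0) a).symm χ' = φ' := by
          rw [Adjunction.homEquiv_counit]
          exact hχ
        have h2 : χ' = u := by
          apply (adj.homEquiv (Fiber.mk hc0) a).symm.injective
          rw [h1]
          exact ((adj.homEquiv (Fiber.mk hc0) a).symm_apply_apply φ').symm
        exact congrArg (fun t => Fiber.fiberInclusion.map t) h2
end

section
/- Let p : E ⥤ K be a functor. Then p is pre-fibered (every morphism f : x ⟶ p.obj e of K admits a cartesian lift with target e, in the weak sense) if and only if for every object x of K the canonical functor from the fiber of p over x to the comma category StructuredArrow x p, sending an object e with p.obj e = x to the pair (e, 𝟙 x : x ⟶ p.obj e), admits a right adjoint (i.e., is a left adjoint). -/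
/-!
Let `p : E ⥤ K` be a functor.  Then `p` is pre-fibered (every morphism `f : x ⟶ p.obj e` of `K`
admits a cartesian lift with target `e`, in the weak sense) if and only if for every object `x`
of `K` the canonical functor from the fiber of `p` over `x` to the comma category
`StructuredArrow x p`, sending an object `e` with `p.obj e = x` to the pair
`(e, 𝟙 x : x ⟶ p.obj e)`, admits a right adjoint (i.e. is a left adjoint).
-/

universe v₁ v₂ u₁ u₂

open CategoryTheory CategoryTheory.Functor

/-- The canonical functor from the fiber of `p` over `x` to the comma category
`StructuredArrow x p`, sending an object `e` with `p.obj e = x` to `(e, 𝟙 x : x ⟶ p.obj e)`. -/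
def fiberToStructuredArrow {E : Type u₁} {K : Type u₂} [Category.{v₁} E] [Category.{v₂} K]
    (p : E ⥤ K) (x : K) : Fiber p x ⥤ StructuredArrow x p where
  obj e := StructuredArrow.mk (Y := e.1) (eqToHom e.2.symm)
  map {a b} φ := StructuredArrow.homMk φ.1 (by
    haveI := φ.2
    rw [IsHomLift.fac' p (𝟙 x) φ.1]
    simp)

section Aux

variable {E : Type u₁} {K : Type u₂} [Category.{v₁} E] [Category.{v₂} K] (p : E ⥤ K) (x : K)

/-- A morphism in `StructuredArrow x p` out of the image of a fiber object lies over the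
target's structure map. -/
lemma isHomLift_right_of_structuredArrowHom {a : Fiber p x} {T : StructuredArrow x p}
    (m : (fiberToStructuredArrow p x).obj a ⟶ T) : p.IsHomLift T.hom m.right := by
  apply IsHomLift.of_fac' p T.hom m.right a.2 rfl
  rw [← StructuredArrow.w m]
  simp [fiberToStructuredArrow]

/-- A morphism lying over the structure map of `T` gives a morphism in the structured arrow
category from the image of a fiber object to `T`. -/
def structuredArrowHomOfIsHomLift {a : Fiber p x} {T : StructuredArrow x p}
    (φ : a.1 ⟶ T.right) [p.IsHomLift T.hom φ] :
    (fiberToStructuredArrow p x).obj a ⟶ T :=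
  StructuredArrow.homMk φ (by
    erw [IsHomLift.fac' p T.hom φ]
    simp [fiberToStructuredArrow])

@[simp]
lemma structuredArrowHomOfIsHomLift_right {a : Fiber p x} {T : StructuredArrow x p}
    (φ : a.1 ⟶ T.right) [p.IsHomLift T.hom φ] :
    (structuredArrowHomOfIsHomLift p x φ).right = φ := rfl

end Aux

theorem isPreFibered_iff_fiberToStructuredArrow_isLeftAdjoint
    {E : Type u₁} {K : Type u₂} [Category.{v₁} E] [Category.{v₂} K] (p : E ⥤ K) :
    p.IsPreFibered ↔ ∀ x : K, (fiberToStructuredArrow p x).IsLeftAdjoint := by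
  constructor
  · intro hp x
    rw [isLeftAdjoint_iff_hasTerminal_costructuredArrow]
    intro T
    obtain ⟨b, φ, hφ⟩ := IsPreFibered.exists_isCartesian' (p := p) T.hom
    haveI : p.IsHomLift T.hom φ := hφ.toIsHomLift
    -- the terminal object of the costructured arrow category
    let bf : Fiber p x := Fiber.mk (IsHomLift.domain_eq p T.hom φ)
    let O : CostructuredArrow (fiberToStructuredArrow p x) T :=
      CostructuredArrow.mk (@structuredArrowHomOfIsHomLift _ _ _ _ p x bf T φ this)
    apply Limits.IsTerminal.hasTerminal (X := O)
    refine Limits.IsTerminal.ofUniqueHom (fun Y => ?lift) (fun Y m => ?uniq)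
    case lift =>
      haveI : p.IsHomLift T.hom Y.hom.right := isHomLift_right_of_structuredArrowHom p x Y.hom
      refine CostructuredArrow.homMk
        ⟨@IsCartesian.map _ _ _ _ p _ _ _ _ T.hom φ hφ _ Y.hom.right this, @IsCartesian.map_isHomLift _ _ _ _ p _ _ _ _ T.hom φ hφ _ Y.hom.right this⟩ ?_
      apply StructuredArrow.hom_ext
      simp [O, fiberToStructuredArrow, structuredArrowHomOfIsHomLift]
      exact @IsCartesian.fac _ _ _ _ p _ _ _ _ T.hom φ hφ _ Y.hom.right this
    case uniq =>
      haveI : p.IsHomLift T.hom Y.hom.right := isHomLift_right_of_structuredArrowHom p x Y.hom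
      apply CostructuredArrow.hom_ext
      apply Fiber.hom_ext
      haveI : p.IsHomLift (𝟙 ((Functor.fromPUnit x).obj T.left)) m.left.1 := m.left.2
      have hw : m.left.1 ≫ φ = Y.hom.right := by
        have := congrArg (fun (f : _ ⟶ T) => f.right) (CostructuredArrow.w m)
        simp [O, fiberToStructuredArrow, structuredArrowHomOfIsHomLift] at this
        exact this
      exact @IsCartesian.map_uniq _ _ _ _ p _ _ _ _ T.hom φ hφ _ Y.hom.right
        (isHomLift_right_of_structuredArrowHom p x Y.hom) m.left.1 m.left.2 hw
  · intro h
    constructor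
    intro a x f
    haveI := h x
    haveI := (isLeftAdjoint_iff_hasTerminal_costructuredArrow.mp (h x)) (StructuredArrow.mk f)
    set T : CostructuredArrow (fiberToStructuredArrow p x) (StructuredArrow.mk f) :=
      Limits.terminal _ with hT
    haveI : p.IsHomLift f T.hom.right := isHomLift_right_of_structuredArrowHom p x T.hom
    refine ⟨T.left.1, T.hom.right, ?_⟩
    refine @IsCartesian.mk _ _ _ _ p _ _ _ _ f T.hom.right this ?_
    intro a' φ' hφ'
    haveI : p.IsHomLift (StructuredArrow.mk f).hom φ' := hφ'
    -- the object of the costructured arrow category given by `φ'`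
    let af : Fiber p x := Fiber.mk (IsHomLift.domain_eq p f φ')
    let Y : CostructuredArrow (fiberToStructuredArrow p x) (StructuredArrow.mk f) :=
      CostructuredArrow.mk (@structuredArrowHomOfIsHomLift _ _ _ _ p x af (StructuredArrow.mk f) φ' this)
    haveI := (Limits.terminal.from Y).left.2
    refine ⟨(Limits.terminal.from Y).left.1, ⟨(Limits.terminal.from Y).left.2, ?_⟩, ?_⟩
    · have := congrArg (fun (g : _ ⟶ StructuredArrow.mk f) => g.right)
        (CostructuredArrow.w (Limits.terminal.from Y))
      simp [Y, fiberToStructuredArrow, structuredArrowHomOfIsHomLift] at this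
      exact this
    · rintro ψ ⟨hψ₁, hψ₂⟩
      let m' : Y ⟶ T := CostructuredArrow.homMk ⟨ψ, hψ₁⟩ (by
        apply StructuredArrow.hom_ext
        exact hψ₂)
      have : m' = Limits.terminal.from Y := Limits.terminal.hom_ext _ _
      exact congrArg (fun (g : Y ⟶ T) => g.left.1) this
end

section
/- Let p : E ⥤ K be a functor between small categories and let [2] denote the linear order 0 < 1 < 2, regarded as a category. Then p is a fibered category (Grothendieck fibration) if and only if for every functor u : [2] ⥤ K, the projection to [2] of the strict pullback of p along u (the category of pairs (i, e) with i an object of [2] and e an object of E satisfying u.obj i = p.obj e, with morphisms pairs of morphisms with matching images) is a fibered category. -/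
/-!
Let `p : E ⥤ K` be a functor between small categories and let `[2]` denote the linear order
`0 < 1 < 2` (the category `Fin 3`).  Then `p` is a fibered category (Grothendieck fibration) if
and only if for every functor `u : [2] ⥤ K`, the projection to `[2]` of the strict pullback of
`p` along `u` (the category of pairs `(i, e)` with `u.obj i = p.obj e`, with morphisms pairs of
morphisms with matching images) is a fibered category.
-/

universe v₁ v₂ v₃ u₁ u₂ u₃

open CategoryTheory CategoryTheory.Functor

/-- The strict pullback of a functor `p : E ⥤ K` along a functor `u : J ⥤ K`:
its objects are pairs `(i, e)` with `u.obj i = p.obj e`, and its morphisms are pairs of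
morphisms with matching images. -/
structure CatStrictPullback {J : Type u₁} {K : Type u₂} {E : Type u₃}
    [Category.{v₁} J] [Category.{v₂} K] [Category.{v₃} E]
    (u : J ⥤ K) (p : E ⥤ K) : Type max u₁ u₃ where
  base : J
  total : E
  w : u.obj base = p.obj total

namespace CatStrictPullback

variable {J : Type u₁} {K : Type u₂} {E : Type u₃}
    [Category.{v₁} J] [Category.{v₂} K] [Category.{v₃} E]
    (u : J ⥤ K) (p : E ⥤ K)

instance : Category (CatStrictPullback u p) where
  Hom a b := { fg : (a.base ⟶ b.base) × (a.total ⟶ b.total) //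
      u.map fg.1 ≫ eqToHom b.w = eqToHom a.w ≫ p.map fg.2 }
  id a := ⟨⟨𝟙 a.base, 𝟙 a.total⟩, by simp⟩
  comp f g := ⟨⟨f.1.1 ≫ g.1.1, f.1.2 ≫ g.1.2⟩, by
    rw [Functor.map_comp, Functor.map_comp, Category.assoc, g.2, ← Category.assoc, f.2,
      Category.assoc]⟩
  id_comp f := by apply Subtype.ext; simp
  comp_id f := by apply Subtype.ext; simp
  assoc f g h := by apply Subtype.ext; simp

/-- The projection of the strict pullback of `p : E ⥤ K` along `u : J ⥤ K` to `J`. -/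
def fst : CatStrictPullback u p ⥤ J where
  obj a := a.base
  map f := f.1.1

end CatStrictPullback

namespace StrictPullbackAux

open CatStrictPullback Functor.IsHomLift

section General

variable {J : Type u₁} {K : Type u₂} {E : Type u₃}
    [Category.{v₁} J] [Category.{v₂} K] [Category.{v₃} E]
    (u : J ⥤ K) (p : E ⥤ K)

lemma hom_ext {a b : CatStrictPullback u p} {f g : a ⟶ b}
    (h1 : f.1.1 = g.1.1) (h2 : f.1.2 = g.1.2) : f = g :=
  Subtype.ext (Prod.ext h1 h2)

/-- Extract the image of a lift, with arbitrary proofs of object equalities. -/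
lemma mapeq {R S : K} {a b : E} (f : R ⟶ S) (φ : a ⟶ b) [p.IsHomLift f φ]
    (ha : p.obj a = R) (hb : p.obj b = S) :
    p.map φ = eqToHom ha ≫ f ≫ eqToHom hb.symm :=
  IsHomLift.fac' p f φ

/-- The strict pullback of a fibered category is fibered. -/
lemma fst_isFibered [p.IsFibered] : (fst u p).IsFibered := by
  apply Functor.IsFibered.of_exists_isStronglyCartesian
  intro a R f
  -- `f : R ⟶ a.base`; lift `u.map f ≫ eqToHom a.w` to a strongly cartesian morphism of `E`
  obtain ⟨e₁, φ, hφ⟩ := Functor.IsPreFibered.exists_isCartesian'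
    (p := p) (u.map f ≫ eqToHom a.w)
  have h₁ : p.obj e₁ = u.obj R := IsHomLift.domain_eq p (u.map f ≫ eqToHom a.w) φ
  have hφmap : p.map φ = eqToHom h₁ ≫ u.map f ≫ eqToHom a.w := by
    have := mapeq p (u.map f ≫ eqToHom a.w) φ h₁ rfl
    simpa using this
  haveI : p.IsStronglyCartesian (u.map f ≫ eqToHom a.w) φ := inferInstance
  have hcomm : u.map f ≫ eqToHom a.w = eqToHom (h₁.symm : u.obj R = p.obj e₁) ≫ p.map φ := by
    rw [hφmap]; simp
  refine ⟨⟨R, e₁, h₁.symm⟩, ⟨⟨f, φ⟩, hcomm⟩, ?_⟩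
  haveI : (fst u p).IsHomLift f
      (⟨⟨f, φ⟩, hcomm⟩ : (⟨R, e₁, h₁.symm⟩ : CatStrictPullback u p) ⟶ a) :=
    IsHomLift.of_fac' (fst u p) f _ rfl rfl (by simp [fst]; erw [eqToHom_refl, eqToHom_refl, Category.comp_id, Category.id_comp])
  constructor
  intro c g χ' hχ'
  haveI := hχ'
  -- the base components
  have hg : g ≫ f = χ'.1.1 :=
    IsHomLift.eq_of_isHomLift (p := fst u p) (a := c) (b := a) (g ≫ f) χ'
  -- the total component of `χ'` lies over `gE ≫ (u.map f ≫ eqToHom a.w)`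
  have hcond : (eqToHom c.w.symm ≫ u.map g) ≫ (u.map f ≫ eqToHom a.w) = p.map χ'.1.2 := by
    have h2 := χ'.2
    rw [← hg] at h2; erw [u.map_comp] at h2
    calc (eqToHom c.w.symm ≫ u.map g) ≫ (u.map f ≫ eqToHom a.w)
        = eqToHom c.w.symm ≫ ((u.map g ≫ u.map f) ≫ eqToHom a.w) := by simp
      _ = eqToHom c.w.symm ≫ (eqToHom c.w ≫ p.map χ'.1.2) := by erw [h2]
      _ = p.map χ'.1.2 := by simp
  haveI : p.IsHomLift ((eqToHom c.w.symm ≫ u.map g) ≫ (u.map f ≫ eqToHom a.w)) χ'.1.2 := by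
    rw [hcond]; infer_instance
  obtain ⟨χE, ⟨hχE₁, hχE₂⟩, hχEuniq⟩ :=
    Functor.IsStronglyCartesian.universal_property' (p := p)
      (f := u.map f ≫ eqToHom a.w) (φ := φ) (eqToHom c.w.symm ≫ u.map g) χ'.1.2
  have hχEmap : p.map χE = (eqToHom c.w.symm ≫ u.map g) ≫ eqToHom h₁.symm := by
    have := mapeq p (eqToHom c.w.symm ≫ u.map g) χE rfl h₁
    simpa using this
  have hcomm2 : u.map g ≫ eqToHom (h₁.symm : u.obj R = p.obj e₁) = eqToHom c.w ≫ p.map χE := by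
    rw [hχEmap]; simp; rfl
  refine ⟨⟨⟨g, χE⟩, hcomm2⟩, ⟨?_, ?_⟩, ?_⟩
  · exact IsHomLift.of_fac' (fst u p) g
      (⟨⟨g, χE⟩, hcomm2⟩ : c ⟶ (⟨R, e₁, h₁.symm⟩ : CatStrictPullback u p))
      rfl rfl (by simp [fst]; erw [eqToHom_refl, eqToHom_refl, Category.id_comp, Category.comp_id])
  · exact hom_ext u p hg hχE₂
  · intro π ⟨hπ1, hπ2⟩
    haveI := hπ1
    have hπb : g = π.1.1 :=
      @IsHomLift.eq_of_isHomLift _ _ _ _ (fst u p) c ⟨R, e₁, h₁.symm⟩ g π hπ1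
    have hπE : p.IsHomLift (eqToHom c.w.symm ≫ u.map g) π.1.2 := by
      apply IsHomLift.of_fac' p _ _ (rfl : p.obj c.total = p.obj c.total) h₁
      have h2 : eqToHom c.w ≫ p.map (π.1.2) = u.map g ≫ eqToHom h₁.symm := by
        rw [← π.2, hπb]; rfl
      calc p.map π.1.2 = eqToHom c.w.symm ≫ (eqToHom c.w ≫ p.map π.1.2) := by simp
        _ = eqToHom c.w.symm ≫ (u.map g ≫ eqToHom h₁.symm) := by rw [h2]; rfl
        _ = eqToHom (rfl : p.obj c.total = p.obj c.total) ≫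
              (eqToHom c.w.symm ≫ u.map g) ≫ eqToHom h₁.symm := by simp
    have : π.1.2 = χE := by
      haveI := hπE
      apply hχEuniq
      refine ⟨hπE, ?_⟩
      have := congrArg (fun z => Subtype.val z) (hπ2)
      exact congrArg Prod.snd this
    exact hom_ext u p hπb.symm this

end General

/-- The morphism `0 ⟶ 1` in `Fin 3`. -/
def hom01 : (0 : Fin 3) ⟶ (1 : Fin 3) := homOfLE (by decide)

/-- The morphism `1 ⟶ 2` in `Fin 3`. -/
def hom12 : (1 : Fin 3) ⟶ (2 : Fin 3) := homOfLE (by decide)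

section Key

variable {K : Type u₂} {E : Type u₃} [Category.{v₂} K] [Category.{v₃} E] (p : E ⥤ K)

/-- The key lemma: if the strict pullback of `p` along `u : Fin 3 ⥤ K` is fibered, then for any
object `e` lying over `u.obj 2` there is a "relative" lift `φ : e₁ ⟶ e` of the morphism `1 ⟶ 2`,
satisfying a universal property with respect to morphisms of `Fin 3` into `1`. -/
lemma exists_relative_lift (u : Fin 3 ⥤ K) [(fst u p).IsFibered]
    (e : E) (w : u.obj 2 = p.obj e) :
    ∃ (e₁ : E) (h₁ : p.obj e₁ = u.obj 1) (φ : e₁ ⟶ e),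
      p.map φ = eqToHom h₁ ≫ u.map hom12 ≫ eqToHom w ∧
      ∀ (i : Fin 3) (hij : i ⟶ (1 : Fin 3)) (d : E) (w₀ : u.obj i = p.obj d) (ψ : d ⟶ e),
        p.map ψ = eqToHom w₀.symm ≫ u.map (hij ≫ hom12) ≫ eqToHom w →
        ∃! χ : d ⟶ e₁,
          p.map χ = eqToHom w₀.symm ≫ u.map hij ≫ eqToHom h₁.symm ∧ χ ≫ φ = ψ := by
  obtain ⟨B, Φ, hΦ⟩ := IsPreFibered.exists_isCartesian (fst u p)
      (rfl : (fst u p).obj ⟨2, e, w⟩ = 2) hom12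
  haveI := hΦ
  haveI : (fst u p).IsStronglyCartesian hom12 Φ :=
    @Functor.IsFibered.isStronglyCartesian_of_isCartesian _ _ _ _ (fst u p) _ _ _ hom12 _ _ Φ hΦ
  have hB : B.base = (1 : Fin 3) :=
    IsHomLift.domain_eq (fst u p) hom12 Φ
  have h₁ : p.obj B.total = u.obj 1 := by rw [← B.w, hB]
  refine ⟨B.total, h₁, Φ.1.2, ?_, ?_⟩
  · have hb1 : Φ.1.1 = eqToHom hB ≫ hom12 :=
      Subsingleton.elim _ _
    have h2 := Φ.2
    rw [hb1, u.map_comp, eqToHom_map] at h2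
    calc p.map Φ.1.2 = eqToHom B.w.symm ≫ (eqToHom B.w ≫ p.map Φ.1.2) := by simp
      _ = eqToHom B.w.symm ≫ ((eqToHom (congrArg u.obj hB) ≫
            u.map hom12) ≫ eqToHom w) := by rw [← h2]
      _ = eqToHom h₁ ≫ u.map hom12 ≫ eqToHom w := by simp
  · intro i hij d w₀ ψ hψ
    have hcommψ : u.map (hij ≫ hom12) ≫ eqToHom w = eqToHom w₀ ≫ p.map ψ := by
      rw [hψ]; simp
    haveI : (fst u p).IsHomLift (hij ≫ hom12 : i ⟶ 2)
        (⟨⟨hij ≫ hom12, ψ⟩, hcommψ⟩ :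
          (⟨i, d, w₀⟩ : CatStrictPullback u p) ⟶ ⟨2, e, w⟩) :=
      IsHomLift.of_fac' (fst u p) _ _ rfl rfl (by simp [fst]; exact Subsingleton.elim _ _)
    obtain ⟨X, ⟨hX1, hX2⟩, hXuniq⟩ :=
      Functor.IsStronglyCartesian.universal_property (p := fst u p)
        (f := hom12) (φ := Φ) hij (hij ≫ hom12) rfl
        (⟨⟨hij ≫ hom12, ψ⟩, hcommψ⟩ :
          (⟨i, d, w₀⟩ : CatStrictPullback u p) ⟶ ⟨2, e, w⟩)
    have hXb : X.1.1 = hij ≫ eqToHom hB.symm := Subsingleton.elim _ _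
    have hXmap : p.map X.1.2 = eqToHom w₀.symm ≫ u.map hij ≫ eqToHom h₁.symm := by
      have h2 := X.2
      rw [hXb, u.map_comp, eqToHom_map] at h2
      calc p.map X.1.2 = eqToHom w₀.symm ≫ (eqToHom w₀ ≫ p.map X.1.2) := by simp
        _ = eqToHom w₀.symm ≫ ((u.map hij ≫ eqToHom (congrArg u.obj hB.symm)) ≫
              eqToHom B.w) := by rw [← h2]
        _ = eqToHom w₀.symm ≫ u.map hij ≫ eqToHom h₁.symm := by simp
    refine ⟨X.1.2, ⟨hXmap, congrArg (fun z => z.1.2) hX2⟩, ?_⟩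
    intro χ₂ ⟨hc1, hc2⟩
    have hcomm₂ : u.map (hij ≫ eqToHom hB.symm) ≫ eqToHom B.w = eqToHom w₀ ≫ p.map χ₂ := by
      rw [hc1, u.map_comp, eqToHom_map]; simp
    have hX₂ : (⟨⟨hij ≫ eqToHom hB.symm, χ₂⟩, hcomm₂⟩ :
        (⟨i, d, w₀⟩ : CatStrictPullback u p) ⟶ B) = X := by
      apply hXuniq
      constructor
      · exact IsHomLift.of_fac' (fst u p) hij _ rfl hB (by simp [fst]; exact Subsingleton.elim _ _)
      · exact hom_ext u p (Subsingleton.elim _ _) hc2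
    exact congrArg (fun z => z.1.2) hX₂

end Key

end StrictPullbackAux

theorem isFibered_iff_strict_pullbacks_over_two_isFibered
    {E K : Type u₁} [SmallCategory E] [SmallCategory K] (p : E ⥤ K) :
    p.IsFibered ↔ ∀ u : Fin 3 ⥤ K, (CatStrictPullback.fst u p).IsFibered := by
  open StrictPullbackAux CatStrictPullback Functor.IsHomLift in
  constructor
  · intro hp u
    exact StrictPullbackAux.fst_isFibered u p
  · intro H
    apply Functor.IsFibered.of_exists_isStronglyCartesian
    intro a R f
    -- the functor `R = R ⟶ p.obj a`
    haveI := H (ComposableArrows.mk₂ (𝟙 R) f)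
    obtain ⟨e₁, h₁, φ, hφ, hU⟩ := StrictPullbackAux.exists_relative_lift p
      (ComposableArrows.mk₂ (𝟙 R) f) a rfl
    -- `h₁ : p.obj e₁ = R`, and `φ` lies over `f`
    have hφ2 : p.map φ = eqToHom h₁ ≫ f := by
      rw [hφ]
      erw [eqToHom_refl, Category.comp_id]
      rfl
    haveI hliftφ : p.IsHomLift f φ :=
      IsHomLift.of_fac' p f φ h₁ rfl (by rw [hφ2]; simp; rfl)
    refine ⟨e₁, φ, ?_⟩
    constructor
    intro c g χ' hχ'
    haveI := hχ'
    have hχ'map : p.map χ' = g ≫ f :=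
      (IsHomLift.eq_of_isHomLift p (a := c) (b := a) (g ≫ f) χ').symm
    -- the functor `p.obj c ⟶ R ⟶ p.obj a`
    haveI := H (ComposableArrows.mk₂ g f)
    obtain ⟨e₁', h₁', φ', hφ', hU'⟩ := StrictPullbackAux.exists_relative_lift p
      (ComposableArrows.mk₂ g f) a rfl
    have hφ'2 : p.map φ' = eqToHom h₁' ≫ f := by
      rw [hφ']
      erw [eqToHom_refl, Category.comp_id]
      rfl
    -- the comparison map `σ : e₁' ⟶ e₁`
    have hcompσ : (ComposableArrows.mk₂ (𝟙 R) f).map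
        (StrictPullbackAux.hom01 ≫ StrictPullbackAux.hom12) = 𝟙 R ≫ f :=
      Functor.map_comp _ _ _
    obtain ⟨σ, ⟨hσ1, hσ2⟩, hσuniq⟩ := hU 0 StrictPullbackAux.hom01 e₁' h₁'.symm φ'
      (by rw [hcompσ, hφ'2]; simp; erw [eqToHom_refl, Category.comp_id]; rfl)
    have hσmap : p.map σ = eqToHom h₁' ≫ eqToHom h₁.symm := by
      rw [hσ1, (show (ComposableArrows.mk₂ (𝟙 R) f).map StrictPullbackAux.hom01 = 𝟙 R from rfl)]
      erw [Category.id_comp]; rfl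
    -- the comparison map `τ : e₁ ⟶ e₁'`
    have hcompτ : (ComposableArrows.mk₂ g f).map (𝟙 (1 : Fin 3) ≫ StrictPullbackAux.hom12) =
        𝟙 R ≫ f := by
      rw [Functor.map_comp, CategoryTheory.Functor.map_id]
      rfl
    obtain ⟨τ, ⟨hτ1, hτ2⟩, hτuniq⟩ := hU' 1 (𝟙 (1 : Fin 3)) e₁ h₁.symm φ
      (by rw [hcompτ, hφ2]; simp; erw [eqToHom_refl, Category.comp_id]; rfl)
    have hτmap : p.map τ = eqToHom h₁ ≫ eqToHom h₁'.symm := by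
      rw [hτ1, CategoryTheory.Functor.map_id]
      simp; erw [eqToHom_trans]
    -- `τ ≫ σ = 𝟙 e₁`
    have hcompι : (ComposableArrows.mk₂ (𝟙 R) f).map (𝟙 (1 : Fin 3) ≫ StrictPullbackAux.hom12) =
        𝟙 R ≫ f := by
      rw [Functor.map_comp, CategoryTheory.Functor.map_id]
      rfl
    obtain ⟨ι, hι, hιuniq⟩ := hU 1 (𝟙 (1 : Fin 3)) e₁ h₁.symm φ
      (by rw [hcompι, hφ2]; simp; erw [eqToHom_refl, Category.comp_id])
    have hτσ : τ ≫ σ = 𝟙 e₁ := by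
      have e1 : τ ≫ σ = ι := hιuniq _ ⟨by
          rw [Functor.map_comp, hτmap, hσmap, CategoryTheory.Functor.map_id]
          simp; erw [eqToHom_trans, eqToHom_trans, eqToHom_trans, eqToHom_refl], by rw [Category.assoc, hσ2, hτ2]⟩
      have e2 : 𝟙 e₁ = ι := hιuniq _ ⟨by
          rw [CategoryTheory.Functor.map_id, CategoryTheory.Functor.map_id]
          simp, by rw [Category.id_comp]⟩
      rw [e1, e2]
    -- the factorization of `χ'` through `φ'`
    have hcompχ : (ComposableArrows.mk₂ g f).map
        (StrictPullbackAux.hom01 ≫ StrictPullbackAux.hom12) = g ≫ f :=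
      Functor.map_comp _ _ _
    obtain ⟨χt, ⟨hχt1, hχt2⟩, hχtuniq⟩ := hU' 0 StrictPullbackAux.hom01 c rfl χ'
      (by rw [hcompχ, hχ'map]; erw [eqToHom_refl, eqToHom_refl, Category.id_comp, Category.comp_id])
    have hχtmap : p.map χt = g ≫ eqToHom h₁'.symm := by
      rw [hχt1, (show (ComposableArrows.mk₂ g f).map StrictPullbackAux.hom01 = g from rfl)]
      erw [eqToHom_refl, Category.id_comp]; rfl
    refine ⟨χt ≫ σ, ⟨?_, ?_⟩, ?_⟩
    · exact IsHomLift.of_fac' p g _ rfl h₁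
        (by rw [Functor.map_comp, hχtmap, hσmap]; simp; erw [eqToHom_trans, eqToHom_trans])
    · rw [Category.assoc, hσ2, hχt2]
    · intro π ⟨hπ1, hπ2⟩
      haveI := hπ1
      have hπmap : p.map π = g ≫ eqToHom h₁.symm := by
        have := StrictPullbackAux.mapeq p g π rfl h₁
        simpa using this
      have hπτ : π ≫ τ = χt := hχtuniq _ ⟨by
          rw [Functor.map_comp, hπmap, hτmap,
            (show (ComposableArrows.mk₂ g f).map StrictPullbackAux.hom01 = g from rfl)]
          simp; erw [eqToHom_trans, eqToHom_trans, eqToHom_refl, Category.id_comp]; rfl, by rw [Category.assoc, hτ2, hπ2]⟩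
      calc π = π ≫ (τ ≫ σ) := by rw [hτσ, Category.comp_id]
        _ = (π ≫ τ) ≫ σ := by rw [Category.assoc]
        _ = χt ≫ σ := by rw [hπτ]
end

section
/- Let W be a class of morphisms (MorphismProperty) of a category C and let L : C ⥤ D be a localization functor of C with respect to W (Functor.IsLocalization). Then L is a final functor and an initial functor. -/
/-!
Let `W` be a class of morphisms of a category `C` and let `L : C ⥤ D` be a localization functor
of `C` with respect to `W`.  Then `L` is a final functor and an initial functor.
-/

universe v₁ v₂ u₁ u₂

open CategoryTheory

namespace LocalizationFinalAux

variable {C : Type u₁} [Category.{v₁} C] (W : MorphismProperty C)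

/-- Every object of `W.Localization` is (strictly) in the image of `W.Q`. -/
lemma Q_obj_as (X : W.Localization) : W.Q.obj X.as.obj = X := by
  rcases X with ⟨⟨X⟩⟩
  rfl

/-- The canonical `eqToHom` identifying an object of `W.Localization` with
an object in the image of `W.Q`. -/
noncomputable def ι (X : W.Localization) : X ⟶ W.Q.obj X.as.obj :=
  eqToHom (Q_obj_as W X).symm

lemma ι_Q (c : C) : ι W (W.Q.obj c) = 𝟙 (W.Q.obj c) := rfl

/-- The morphism property used to prove connectedness of structured arrow categories. -/
def P : MorphismProperty W.Localization := fun X Y g =>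
  ∀ (d : W.Localization) (f : d ⟶ X),
    Zigzag (StructuredArrow.mk (f ≫ ι W X)) (StructuredArrow.mk (f ≫ g ≫ ι W Y))

instance : (P W).IsStableUnderComposition := by
  constructor
  intro X Y Z f g hf hg d f₀
  have h1 := hf d f₀
  have h2 := hg d (f₀ ≫ f)
  simp only [Category.assoc] at h1 h2 ⊢
  exact h1.trans h2

lemma key : ∀ ⦃X Y : W.Localization⦄ (g : X ⟶ Y) (d : W.Localization) (f : d ⟶ X),
    Zigzag (StructuredArrow.mk (f ≫ ι W X)) (StructuredArrow.mk (f ≫ g ≫ ι W Y)) := by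
  have hP : P W = ⊤ := by
    apply Localization.Construction.morphismProperty_eq_top
    · intro X Y φ d f
      rw [ι_Q, ι_Q]
      erw [Category.comp_id, Category.comp_id]
      exact Zigzag.of_hom (StructuredArrow.homMk φ rfl)
    · intro X Y w hw d f
      rw [ι_Q, ι_Q]
      erw [Category.comp_id, Category.comp_id]
      refine Zigzag.of_inv (StructuredArrow.homMk w ?_)
      change (f ≫ (Localization.Construction.wIso w hw).inv) ≫
        (Localization.Construction.wIso w hw).hom = f
      simp
  intro X Y g
  have : P W g := by rw [hP]; trivial
  exact this

lemma Q_final : W.Q.Final := by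
  constructor
  intro d
  haveI : Nonempty (StructuredArrow d W.Q) := ⟨StructuredArrow.mk (ι W d)⟩
  apply zigzag_isConnected
  suffices h : ∀ (j : StructuredArrow d W.Q), Zigzag (StructuredArrow.mk (ι W d)) j by
    intro j₁ j₂
    exact (h j₁).symm.trans (h j₂)
  intro j
  have := key W j.hom d (𝟙 d)
  simp only [Category.id_comp, ι_Q, Category.comp_id] at this
  rw [StructuredArrow.eq_mk j]
  erw [Category.comp_id] at this
  exact this

lemma final_aux {C : Type u₁} {D : Type u₂} [Category.{v₁} C] [Category.{v₂} D]
    (W : MorphismProperty C) (L : C ⥤ D) [L.IsLocalization W] : L.Final := by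
  haveI : W.Q.Final := Q_final W
  haveI : (W.Q ⋙ (Localization.uniq W.Q L W).functor).Final :=
    Functor.final_comp_equivalence _ _
  exact Functor.final_of_natIso (Localization.compUniqFunctor W.Q L W)

end LocalizationFinalAux

theorem localization_final_and_initial
    {C : Type u₁} {D : Type u₂} [Category.{v₁} C] [Category.{v₂} D]
    (W : MorphismProperty C) (L : C ⥤ D) [L.IsLocalization W] :
    L.Final ∧ L.Initial := by
  haveI : L.op.Final := LocalizationFinalAux.final_aux W.op L.op
  exact ⟨LocalizationFinalAux.final_aux W L, Functor.initial_of_final_op L⟩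
end

section
/- Let F : C ⥤ Cat be a functor, G : C₀ ⥤ C a functor, Z a cocomplete category, and H : Grothendieck F ⥤ Z a functor. Writing q = Grothendieck.forget F and q₀ = Grothendieck.forget (G ⋙ F), one has q₀ ⋙ G = Grothendieck.pre F G ⋙ q, and the induced Beck–Chevalley natural transformation from the pointwise left Kan extension Lan_{q₀}((Grothendieck.pre F G) ⋙ H) to G ⋙ Lan_q H is a natural isomorphism of functors C₀ ⥤ Z. -/
/-!
Let `F : C ⥤ Cat` be a functor, `G : C₀ ⥤ C` a functor, `Z` a cocomplete category, and
`H : Grothendieck F ⥤ Z` a functor.  Writing `q = Grothendieck.forget F` and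
`q₀ = Grothendieck.forget (G ⋙ F)`, one has `q₀ ⋙ G = Grothendieck.pre F G ⋙ q`, and the
induced Beck–Chevalley natural transformation from the pointwise left Kan extension
`Lan_{q₀}((Grothendieck.pre F G) ⋙ H)` to `G ⋙ Lan_q H` is a natural isomorphism of functors
`C₀ ⥤ Z`.
-/

universe v u

open CategoryTheory CategoryTheory.Limits

namespace GrothBC

variable {C C₀ : Type u} [SmallCategory C] [SmallCategory C₀]
variable (F : C ⥤ Cat.{u, u}) (G : C₀ ⥤ C)

@[simps]
def T (c₀ : C₀) :
    CostructuredArrow (Grothendieck.forget (G ⋙ F)) c₀ ⥤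
      CostructuredArrow (Grothendieck.forget F) (G.obj c₀) where
  obj g := CostructuredArrow.mk (Y := (Grothendieck.pre F G).obj g.left) (G.map g.hom)
  map {g₁ g₂} φ := CostructuredArrow.homMk ((Grothendieck.pre F G).map φ.left)
    (by
      erw [CostructuredArrow.mk_hom_eq_self, CostructuredArrow.mk_hom_eq_self]
      erw [← G.map_comp]
      congr 1
      exact CostructuredArrow.w φ)

instance final_T (c₀ : C₀) : (T F G c₀).Final := by
  constructor
  intro t
  let A₀ : Grothendieck (G ⋙ F) := ⟨c₀, (F.map t.hom).toFunctor.obj t.left.fiber⟩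
  let g₀ : CostructuredArrow (Grothendieck.forget (G ⋙ F)) c₀ :=
    CostructuredArrow.mk (Y := A₀) (𝟙 c₀)
  let x₀ : StructuredArrow t (T F G c₀) :=
    StructuredArrow.mk (Y := g₀)
      (CostructuredArrow.homMk (Grothendieck.Hom.mk t.hom (𝟙 _)) (by show t.hom ≫ G.map (𝟙 c₀) = t.hom; rw [G.map_id]; exact Category.comp_id _))
  have zig : ∀ x : StructuredArrow t (T F G c₀), Zigzag x x₀ := by
    intro x
    obtain ⟨⟨⟩, g, ψ⟩ := x
    have wψ : ψ.left.base ≫ G.map g.hom = t.hom := by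
      exact CostructuredArrow.w ψ
    let A₁ : Grothendieck (G ⋙ F) := ⟨g.left.base, (F.map ψ.left.base).toFunctor.obj t.left.fiber⟩
    let g₁ : CostructuredArrow (Grothendieck.forget (G ⋙ F)) c₀ :=
      CostructuredArrow.mk (Y := A₁) g.hom
    let x₁ : StructuredArrow t (T F G c₀) :=
      StructuredArrow.mk (Y := g₁)
        (CostructuredArrow.homMk (Grothendieck.Hom.mk ψ.left.base (𝟙 _))
          (by exact wψ))
    let χ : g₁ ⟶ g := CostructuredArrow.homMk
      (Grothendieck.Hom.mk (𝟙 g.left.base) (eqToHom (by simp only [g₁, A₁]; delta T CostructuredArrow.homMk CostructuredArrow.mk Grothendieck.forget Grothendieck.pre; dsimp only; simp; rfl) ≫ ψ.left.fiber))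
      (by exact Category.id_comp _)
    let u : x₁ ⟶ StructuredArrow.mk ψ := StructuredArrow.homMk χ (by
      apply CommaMorphism.ext
      · apply Grothendieck.ext
        · simp only [x₁, g₁, A₁, χ]; delta T CostructuredArrow.homMk CostructuredArrow.mk StructuredArrow.mk StructuredArrow.hom Grothendieck.pre; dsimp only; simp; erw [eqToHom_trans_assoc, eqToHom_trans_assoc, eqToHom_refl, Category.id_comp]
        · show ψ.left.base ≫ G.map (𝟙 g.left.base) = ψ.left.base; rw [G.map_id]; exact Category.comp_id _
      · apply Subsingleton.elim)
    have e₂ : ((G ⋙ F).map g.hom).toFunctor.obj A₁.fiber = A₀.fiber := by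
      show ((G ⋙ F).map g.hom).toFunctor.obj ((F.map ψ.left.base).toFunctor.obj t.left.fiber) =
        (F.map t.hom).toFunctor.obj t.left.fiber
      erw [← wψ, F.map_comp]; rfl
    let χ' : g₁ ⟶ g₀ := CostructuredArrow.homMk
      (Grothendieck.Hom.mk g.hom (eqToHom e₂)) (by exact Category.comp_id _)
    let v : x₁ ⟶ x₀ := StructuredArrow.homMk χ' (by
      apply CommaMorphism.ext
      · apply Grothendieck.ext
        · simp only [x₁, g₁, A₁, χ', x₀, g₀, A₀]; delta T CostructuredArrow.homMk CostructuredArrow.mk StructuredArrow.mk StructuredArrow.hom Grothendieck.pre; dsimp only; simp; erw [eqToHom_trans_assoc, eqToHom_trans, eqToHom_refl]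
        · show ψ.left.base ≫ G.map g.hom = t.hom; exact wψ
      · apply Subsingleton.elim)
    exact .tail (.single (Or.inr ⟨u⟩)) (Or.inl ⟨v⟩)
  have : Nonempty (StructuredArrow t (T F G c₀)) := ⟨x₀⟩
  exact zigzag_isConnected fun j₁ j₂ => (zig j₁).trans ((zig j₂).symm)

end GrothBC

theorem grothendieck_beck_chevalley
    {C C₀ : Type u} [SmallCategory C] [SmallCategory C₀]
    (F : C ⥤ Cat.{u, u}) (G : C₀ ⥤ C)
    {Z : Type v} [Category.{u} Z] [HasColimits Z] (H : Grothendieck F ⥤ Z) :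
    ∃ hsq : Grothendieck.forget (G ⋙ F) ⋙ G = Grothendieck.pre F G ⋙ Grothendieck.forget F,
      IsIso
        (Functor.descOfIsLeftKanExtension
          ((Grothendieck.forget (G ⋙ F)).lan.obj (Grothendieck.pre F G ⋙ H))
          ((Grothendieck.forget (G ⋙ F)).lanUnit.app (Grothendieck.pre F G ⋙ H))
          (G ⋙ (Grothendieck.forget F).lan.obj H)
          (Functor.whiskerLeft (Grothendieck.pre F G) ((Grothendieck.forget F).lanUnit.app H) ≫
            eqToHom (by
              show Grothendieck.pre F G ⋙
                    (Grothendieck.forget F ⋙ (Grothendieck.forget F).lan.obj H) =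
                  (Grothendieck.forget (G ⋙ F) ⋙ G) ⋙ (Grothendieck.forget F).lan.obj H
              rw [← Functor.assoc, ← hsq]))) := by

  refine ⟨rfl, ?_⟩
  rw [← Functor.isLeftKanExtension_iff_isIso _
    ((Grothendieck.forget (G ⋙ F)).lanUnit.app (Grothendieck.pre F G ⋙ H)) _
    (Functor.descOfIsLeftKanExtension_fac _ _ _ _)]
  refine Functor.LeftExtension.IsPointwiseLeftKanExtension.isLeftKanExtension
    (E := Functor.LeftExtension.mk _ _) ?_
  intro c₀
  have hE := Functor.isPointwiseLeftKanExtensionOfIsLeftKanExtension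
    ((Grothendieck.forget F).lan.obj H) ((Grothendieck.forget F).lanUnit.app H)
  refine IsColimit.ofIsoColimit
    ((Functor.Final.isColimitWhiskerEquiv (GrothBC.T F G c₀) _).symm (hE (G.obj c₀))) ?_
  refine Cocones.ext (Iso.refl _) (fun g => ?_)
  simp [GrothBC.T, eqToHom_app]
  erw [eqToHom_refl]
  erw [Category.comp_id, Category.comp_id]
  erw [eqToHom_refl, Category.comp_id]
  rfl
end

section
/- Let F : K ⥤ Cat be a functor and let y be an object of K. The canonical functor from F.obj y to the comma category CostructuredArrow (Grothendieck.forget F) y, sending an object a of F.obj y to the pair ((y, a), 𝟙 y), is final. -/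
/-!
Let `F : K ⥤ Cat` be a functor and let `y` be an object of `K`.  The canonical functor from
`F.obj y` to the comma category `CostructuredArrow (Grothendieck.forget F) y`, sending an object
`a` of `F.obj y` to the pair `((y, a), 𝟙 y)`, is final.
-/

universe v₁ u₁

open CategoryTheory

/-- The canonical functor `F.obj y ⥤ CostructuredArrow (Grothendieck.forget F) y` sending an
object `a` of `F.obj y` to `((y, a), 𝟙 y)`. -/
def grothendieckFiberToCostructuredArrow {K : Type u₁} [Category.{v₁} K]
    (F : K ⥤ Cat) (y : K) :
    F.obj y ⥤ CostructuredArrow (Grothendieck.forget F) y where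
  obj a := CostructuredArrow.mk (Y := (Grothendieck.ι F y).obj a) (𝟙 y)
  map f := CostructuredArrow.homMk ((Grothendieck.ι F y).map f) (by first | exact Category.id_comp _ | (simp [Grothendieck.forget]; exact Category.id_comp _))
  map_id a := by
    apply CostructuredArrow.hom_ext
    show (Grothendieck.ι F y).map (𝟙 a) = 𝟙 ((Grothendieck.ι F y).obj a)
    exact (Grothendieck.ι F y).map_id a
  map_comp f g := by
    apply CostructuredArrow.hom_ext
    simp only [CostructuredArrow.homMk_left, CostructuredArrow.comp_left, Functor.map_comp]
    rfl


section Aux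

variable {K : Type u₁} [Category.{v₁} K] (F : K ⥤ Cat) (y : K)

@[simp] lemma gftca_obj_left (a : F.obj y) :
    ((grothendieckFiberToCostructuredArrow F y).obj a).left = (Grothendieck.ι F y).obj a := rfl

@[simp] lemma gftca_obj_hom (a : F.obj y) :
    ((grothendieckFiberToCostructuredArrow F y).obj a).hom = 𝟙 y := rfl

@[simp] lemma gftca_map_left {a b : F.obj y} (f : a ⟶ b) :
    ((grothendieckFiberToCostructuredArrow F y).map f).left = (Grothendieck.ι F y).map f := rfl

/-- The canonical object of `StructuredArrow d (grothendieckFiberToCostructuredArrow F y)`. -/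
def gftcaX₀ (d : CostructuredArrow (Grothendieck.forget F) y) :
    StructuredArrow d (grothendieckFiberToCostructuredArrow F y) :=
  StructuredArrow.mk (Y := (F.map d.hom).toFunctor.obj d.left.fiber)
    (CostructuredArrow.homMk (Grothendieck.Hom.mk d.hom (𝟙 _)) (by simp; exact Category.comp_id _))

/-- A morphism from the canonical object to any object. -/
def gftcaHom (d : CostructuredArrow (Grothendieck.forget F) y)
    (X : StructuredArrow d (grothendieckFiberToCostructuredArrow F y)) :
    gftcaX₀ F y d ⟶ X := by
  have hb : X.hom.left.base = d.hom := by
    exact (Category.comp_id _).symm.trans (CostructuredArrow.w X.hom)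
  refine StructuredArrow.homMk
    ((eqToHom (by rw [hb]; rfl) : (F.map d.hom).toFunctor.obj d.left.fiber ⟶
      (F.map X.hom.left.base).toFunctor.obj d.left.fiber) ≫ X.hom.left.fiber) ?_
  apply CostructuredArrow.hom_ext
  simp only [gftcaX₀, StructuredArrow.mk_hom_eq_self, CostructuredArrow.comp_left,
    CostructuredArrow.homMk_left, gftca_map_left]
  apply Grothendieck.ext
  case w_base => simp [Grothendieck.ι, hb]; exact Category.comp_id _
  case w_fiber =>
    simp [Grothendieck.ι, Grothendieck.comp_fiber, eqToHom_map]
    erw [(F.map (𝟙 y)).toFunctor.map_id, Category.id_comp, eqToHom_trans_assoc,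
      eqToHom_trans_assoc, eqToHom_trans_assoc, eqToHom_refl, Category.id_comp]

end Aux

theorem grothendieckFiberToCostructuredArrow_final {K : Type u₁} [Category.{v₁} K]
    (F : K ⥤ Cat) (y : K) :
    (grothendieckFiberToCostructuredArrow F y).Final := by
  constructor
  intro d
  have : Nonempty (StructuredArrow d (grothendieckFiberToCostructuredArrow F y)) :=
    ⟨gftcaX₀ F y d⟩
  apply zigzag_isConnected
  intro X Y
  exact Relation.ReflTransGen.tail (Relation.ReflTransGen.single (Or.inr ⟨gftcaHom F y d X⟩))
    (Or.inl ⟨gftcaHom F y d Y⟩)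
end

section
/- Let F : K ⥤ Cat be a functor, Z a cocomplete category, and H : Grothendieck F ⥤ Z a functor. For every object k of K, the value at k of the pointwise left Kan extension of H along Grothendieck.forget F is naturally isomorphic to the colimit of Grothendieck.ι F k ⋙ H (the restriction of H to the fiber F.obj k). -/
/-!
Let `F : K ⥤ Cat` be a functor, `Z` a cocomplete category, and `H : Grothendieck F ⥤ Z` a
functor.  For every object `k` of `K`, the value at `k` of the pointwise left Kan extension of
`H` along `Grothendieck.forget F` is naturally isomorphic to the colimit of
`Grothendieck.ι F k ⋙ H` (the restriction of `H` to the fiber `F.obj k`).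
-/

universe v u

open CategoryTheory CategoryTheory.Limits

namespace GrothLKEAux

variable {K : Type u} [SmallCategory K] (F : K ⥤ Cat.{u, u}) (k : K)

/-- The inclusion of the fiber into the costructured arrow category. -/
def incl : F.obj k ⥤ CostructuredArrow (Grothendieck.forget F) k :=
  (Grothendieck.ι F k).toCostructuredArrow (Grothendieck.forget F) k (fun _ => 𝟙 k) (by intros; exact Category.comp_id _)

/-- The canonical map from an object of the costructured arrow category into the image
of `incl`. -/
def inclHom {j : K} (b : F.obj j) (f : j ⟶ k) :
    (CostructuredArrow.mk (S := Grothendieck.forget F)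
        (Y := ({ base := j, fiber := b } : Grothendieck F)) f) ⟶
      (incl F k).obj ((F.map f).toFunctor.obj b) :=
  CostructuredArrow.homMk (Grothendieck.Hom.mk f (𝟙 _)) (by exact Category.comp_id _)

lemma eqToHom_map_id_aux {C D : Type*} [Category C] [Category D] (G : C ⥤ D) (X0 : C)
    {W B X Y : D} (g : W ⟶ Y) (p1 : W = B) (p2 : B = G.obj X0) (p3 : G.obj X0 = X) (p4 : X = W) :
    eqToHom p1 ≫ eqToHom p2 ≫ G.map (𝟙 X0) ≫ eqToHom p3 ≫ eqToHom p4 ≫ g = g := by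
  simp

lemma initHom {j : K} (b : F.obj j) (f : j ⟶ k)
    (u : StructuredArrow (CostructuredArrow.mk (S := Grothendieck.forget F)
      (Y := ({ base := j, fiber := b } : Grothendieck F)) f) (incl F k)) :
    Nonempty (StructuredArrow.mk (inclHom F k b f) ⟶ u) := by
  have hbase : u.hom.left.base = f := (Category.comp_id _).symm.trans (CostructuredArrow.w u.hom)
  refine ⟨StructuredArrow.homMk (eqToHom (by rw [hbase]; rfl) ≫ u.hom.left.fiber) ?_⟩
  apply CostructuredArrow.hom_ext
  apply Grothendieck.ext
  · exact eqToHom_map_id_aux _ _ _ _ _ _ _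
  · exact (Category.comp_id _).trans hbase.symm

instance final_incl : (incl F k).Final := by
  constructor
  intro X
  obtain ⟨⟨j, b⟩, ⟨⟨⟩⟩, f⟩ := X
  dsimp at f
  refine @isConnected_of_zigzag _ _ ⟨StructuredArrow.mk (inclHom F k b f)⟩ ?_
  intro u v
  exact ⟨[StructuredArrow.mk (inclHom F k b f), v],
    ⟨List.Chain.cons (Or.inr (initHom F k b f u))
      (List.Chain.cons (Or.inl (initHom F k b f v)) List.Chain.nil), rfl⟩⟩

end GrothLKEAux

theorem grothendieck_pointwiseLeftKanExtension_obj_iso_colimit_fiber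
    {K : Type u} [SmallCategory K] (F : K ⥤ Cat.{u, u})
    {Z : Type v} [Category.{u} Z] [HasColimits Z] (H : Grothendieck F ⥤ Z) (k : K) :
    Nonempty (((Grothendieck.forget F).pointwiseLeftKanExtension H).obj k ≅
      colimit (Grothendieck.ι F k ⋙ H)) := by
  exact ⟨(Functor.Final.colimitIso (GrothLKEAux.incl F k)
      (CostructuredArrow.proj (Grothendieck.forget F) k ⋙ H)).symm ≪≫
    HasColimit.isoOfNatIso (NatIso.ofComponents (fun a => Iso.refl _)
      (by intros; exact (Category.comp_id _).trans (Category.id_comp _).symm))⟩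
end
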